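/- For every integer n ≥ 6, there exist two extremal arrays A and B in S(n, n+1) such that A and B have the same multiset of entries (i.e., the same set of entries counted with multiplicities), but A and B are not equivalent. -/
import Mathlib


/-- An `n × m` real matrix is a *doubly stochastic array* if its entries are
nonnegative, each column sums to `n` and each row sums to `m`. -/
def IsDSA (n m : ℕ) (A : Matrix (Fin n) (Fin m) ℝ) : Prop :=
  (∀ i j, 0 ≤ A i j) ∧ (∀ j, ∑ i, A i j = (n : ℝ)) ∧ (∀ i, ∑ j, A i j = (m : ℝ))

/-- An array `A ∈ S(n,m)` is *extremal* if it cannot be written as a convex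
combination of two doubly stochastic arrays both different from `A`. -/
def IsExtremal (n m : ℕ) (A : Matrix (Fin n) (Fin m) ℝ) : Prop :=
  IsDSA n m A ∧ ∀ (B C : Matrix (Fin n) (Fin m) ℝ) (t : ℝ),
    IsDSA n m B → IsDSA n m C → 0 < t → t < 1 →
    A = t • B + (1 - t) • C → B = A ∨ C = A

/-- The support of a matrix: the set of positions of its nonzero entries. -/
def matSupp (n m : ℕ) (A : Matrix (Fin n) (Fin m) ℝ) : Set (Fin n × Fin m) :=
  {p | A p.1 p.2 ≠ 0}

/-- The size of the support of a matrix. -/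
noncomputable def suppCard (n m : ℕ) (A : Matrix (Fin n) (Fin m) ℝ) : ℕ :=
  (matSupp n m A).ncard

/-- A subset `Ω` of positions contains a *cycle* if there are `s ≥ 2`, distinct row
indices `i₁,…,i_s` and distinct column indices `j₁,…,j_s` such that all the pairs
`(i₁,j₁), (i₂,j₁), (i₂,j₂), (i₃,j₂), …, (i_s,j_s), (i₁,j_s)` belong to `Ω`. -/
def ContainsCycle (n m : ℕ) (Ω : Set (Fin n × Fin m)) : Prop :=
  ∃ s : ℕ, 2 ≤ s ∧ ∃ (i : ZMod s → Fin n) (j : ZMod s → Fin m),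
    Function.Injective i ∧ Function.Injective j ∧
    ∀ t : ZMod s, (i t, j t) ∈ Ω ∧ (i (t + 1), j t) ∈ Ω

/-- Two matrices are *equivalent* if one is obtained from the other by a
permutation of rows and a permutation of columns. -/
def MatEquiv (n m : ℕ) (A B : Matrix (Fin n) (Fin m) ℝ) : Prop :=
  ∃ (σ : Equiv.Perm (Fin n)) (τ : Equiv.Perm (Fin m)), ∀ i j, B i j = A (σ i) (τ j)


section AuxSums

lemma sum_eq_one_aux {m : ℕ} (f : Fin m → ℝ) (a : Fin m)
    (h : ∀ c, c ≠ a → f c = 0) : ∑ c, f c = f a :=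
  Finset.sum_eq_single_of_mem a (Finset.mem_univ a) fun c _ hc => h c hc

lemma sum_eq_two_aux {m : ℕ} (f : Fin m → ℝ) (a b : Fin m) (hab : a ≠ b)
    (h : ∀ c, c ≠ a → c ≠ b → f c = 0) : ∑ c, f c = f a + f b := by
  classical
  have hs : ∑ c ∈ ({a, b} : Finset (Fin m)), f c = ∑ c, f c := by
    refine Finset.sum_subset (Finset.subset_univ _) ?_
    intro c _ hc
    simp only [Finset.mem_insert, Finset.mem_singleton, not_or] at hc
    exact h c hc.1 hc.2
  rw [← hs, Finset.sum_pair hab]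

lemma sum_eq_three_aux {m : ℕ} (f : Fin m → ℝ) (a b c : Fin m)
    (hab : a ≠ b) (hac : a ≠ c) (hbc : b ≠ c)
    (h : ∀ d, d ≠ a → d ≠ b → d ≠ c → f d = 0) : ∑ d, f d = f a + f b + f c := by
  classical
  have hs : ∑ d ∈ ({a, b, c} : Finset (Fin m)), f d = ∑ d, f d := by
    refine Finset.sum_subset (Finset.subset_univ _) ?_
    intro d _ hd
    simp only [Finset.mem_insert, Finset.mem_singleton, not_or] at hd
    exact h d hd.1 hd.2.1 hd.2.2
  rw [← hs, Finset.sum_insert (by simp [hab, hac]), Finset.sum_insert (by simp [hbc]),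
    Finset.sum_singleton]
  ring

lemma fin_mk_ne {m a b : ℕ} (ha : a < m) (hb : b < m) (h : a ≠ b) :
    (⟨a, ha⟩ : Fin m) ≠ ⟨b, hb⟩ := fun hh => h (by injection hh)

end AuxSums

section Defs

def colA (n i : ℕ) : ℕ := if i = 2 then 0 else if i + 3 ≤ n then 1 else 2
def colB (i : ℕ) : ℕ := if i = 2 then 0 else 2

lemma colA_le (n i : ℕ) : colA n i ≤ 2 := by unfold colA; split_ifs <;> omega
lemma colB_le (i : ℕ) : colB i ≤ 2 := by unfold colB; split_ifs <;> omega
lemma colA_ne0 (n i : ℕ) (h : i ≠ 2) : colA n i ≠ 0 := by unfold colA; split_ifs <;> omega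
lemma colB_ne0 (i : ℕ) (h : i ≠ 2) : colB i ≠ 0 := by unfold colB; split_ifs <;> omega
lemma colB_ne1 (i : ℕ) : colB i ≠ 1 := by unfold colB; split_ifs <;> omega
lemma colA_two (n : ℕ) : colA n 2 = 0 := by unfold colA; simp
lemma colB_two : colB 2 = 0 := by unfold colB; simp
lemma colA_mid (n i : ℕ) (h2 : i ≠ 2) (h3 : i + 3 ≤ n) : colA n i = 1 := by
  unfold colA; split_ifs <;> omega
lemma colA_ne1 (n i : ℕ) (h : i = 2 ∨ ¬ (i + 3 ≤ n)) : colA n i ≠ 1 := by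
  unfold colA; split_ifs <;> omega
lemma colA_hi (n i : ℕ) (h2 : i ≠ 2) (h3 : ¬ (i + 3 ≤ n)) : colA n i = 2 := by
  unfold colA; split_ifs <;> omega
lemma colB_hi (i : ℕ) (h2 : i ≠ 2) : colB i = 2 := by unfold colB; split_ifs <;> omega

def MA (n : ℕ) : Matrix (Fin n) (Fin (n+1)) ℝ := fun i j =>
  if (i : ℕ) = 0 then (if (j : ℕ) = 0 then (n : ℝ) - 1 else if (j : ℕ) = 1 then 2 else 0)
  else if (i : ℕ) = 1 then
    (if (j : ℕ) = 1 then 3 else if (j : ℕ) = 2 then (n : ℝ) - 2 else 0)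
  else if (j : ℕ) = colA n (i : ℕ) then 1
  else if (j : ℕ) = (i : ℕ) + 1 then (n : ℝ) else 0

def MB (n : ℕ) : Matrix (Fin n) (Fin (n+1)) ℝ := fun i j =>
  if (i : ℕ) = 0 then (if (j : ℕ) = 0 then (n : ℝ) - 1 else if (j : ℕ) = 1 then 2 else 0)
  else if (i : ℕ) = 1 then
    (if (j : ℕ) = 1 then (n : ℝ) - 2 else if (j : ℕ) = 2 then 3 else 0)
  else if (j : ℕ) = colB (i : ℕ) then 1
  else if (j : ℕ) = (i : ℕ) + 1 then (n : ℝ) else 0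

end Defs

section Nonneg

lemma MA_nonneg (n : ℕ) (hn : 6 ≤ n) : ∀ i j, 0 ≤ MA n i j := by
  intro i j
  have h6 : (6 : ℝ) ≤ (n : ℝ) := by exact_mod_cast hn
  simp only [MA]
  split_ifs <;> linarith

lemma MB_nonneg (n : ℕ) (hn : 6 ≤ n) : ∀ i j, 0 ≤ MB n i j := by
  intro i j
  have h6 : (6 : ℝ) ≤ (n : ℝ) := by exact_mod_cast hn
  simp only [MB]
  split_ifs <;> linarith

end Nonneg

section RowSums

lemma MA_rowsum (n : ℕ) (hn : 6 ≤ n) (i : Fin n) : ∑ j, MA n i j = (n : ℝ) + 1 := by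
  by_cases hi0 : (i : ℕ) = 0
  · rw [sum_eq_two_aux _ (⟨0, by omega⟩ : Fin (n+1)) ⟨1, by omega⟩
      (by apply Fin.ne_of_val_ne; simp)
      (fun c hc1 hc2 => by
        have h1 : (c : ℕ) ≠ 0 := fun h => hc1 (Fin.val_injective h)
        have h2 : (c : ℕ) ≠ 1 := fun h => hc2 (Fin.val_injective h)
        simp only [MA]
        split_ifs <;> first | rfl | (exfalso; first | omega | assumption))]
    simp only [MA, hi0]
    norm_num
    ring
  · by_cases hi1 : (i : ℕ) = 1
    · rw [sum_eq_two_aux _ (⟨1, by omega⟩ : Fin (n+1)) ⟨2, by omega⟩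
        (by apply Fin.ne_of_val_ne; simp)
        (fun c hc1 hc2 => by
          have h1 : (c : ℕ) ≠ 1 := fun h => hc1 (Fin.val_injective h)
          have h2 : (c : ℕ) ≠ 2 := fun h => hc2 (Fin.val_injective h)
          simp only [MA]
          split_ifs <;> first | rfl | (exfalso; first | omega | assumption))]
      simp only [MA, hi1]
      norm_num
      ring
    · have hi2 : 2 ≤ (i : ℕ) := by omega
      have hcle := colA_le n (i : ℕ)
      rw [sum_eq_two_aux _ (⟨colA n (i : ℕ), by omega⟩ : Fin (n+1)) ⟨(i : ℕ) + 1, by omega⟩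
        (by apply Fin.ne_of_val_ne; simp only [Fin.val_mk]; omega)
        (fun c hc1 hc2 => by
          have h1 : (c : ℕ) ≠ colA n (i : ℕ) := fun h => hc1 (Fin.val_injective h)
          have h2 : (c : ℕ) ≠ (i : ℕ) + 1 := fun h => hc2 (Fin.val_injective h)
          simp only [MA]
          split_ifs <;> first | rfl | (exfalso; first | omega | assumption))]
      simp only [MA, Fin.val_mk]
      split_ifs <;> first | (exfalso; first | omega | assumption) | ring

lemma MB_rowsum (n : ℕ) (hn : 6 ≤ n) (i : Fin n) : ∑ j, MB n i j = (n : ℝ) + 1 := by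
  by_cases hi0 : (i : ℕ) = 0
  · rw [sum_eq_two_aux _ (⟨0, by omega⟩ : Fin (n+1)) ⟨1, by omega⟩
      (by apply Fin.ne_of_val_ne; simp)
      (fun c hc1 hc2 => by
        have h1 : (c : ℕ) ≠ 0 := fun h => hc1 (Fin.val_injective h)
        have h2 : (c : ℕ) ≠ 1 := fun h => hc2 (Fin.val_injective h)
        simp only [MB]
        split_ifs <;> first | rfl | (exfalso; first | omega | assumption))]
    simp only [MB, hi0]
    norm_num
    ring
  · by_cases hi1 : (i : ℕ) = 1
    · rw [sum_eq_two_aux _ (⟨1, by omega⟩ : Fin (n+1)) ⟨2, by omega⟩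
        (by apply Fin.ne_of_val_ne; simp)
        (fun c hc1 hc2 => by
          have h1 : (c : ℕ) ≠ 1 := fun h => hc1 (Fin.val_injective h)
          have h2 : (c : ℕ) ≠ 2 := fun h => hc2 (Fin.val_injective h)
          simp only [MB]
          split_ifs <;> first | rfl | (exfalso; first | omega | assumption))]
      simp only [MB, hi1]
      norm_num
      ring
    · have hi2 : 2 ≤ (i : ℕ) := by omega
      have hcle := colB_le (i : ℕ)
      rw [sum_eq_two_aux _ (⟨colB (i : ℕ), by omega⟩ : Fin (n+1)) ⟨(i : ℕ) + 1, by omega⟩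
        (by apply Fin.ne_of_val_ne; simp only [Fin.val_mk]; omega)
        (fun c hc1 hc2 => by
          have h1 : (c : ℕ) ≠ colB (i : ℕ) := fun h => hc1 (Fin.val_injective h)
          have h2 : (c : ℕ) ≠ (i : ℕ) + 1 := fun h => hc2 (Fin.val_injective h)
          simp only [MB]
          split_ifs <;> first | rfl | (exfalso; first | omega | assumption))]
      simp only [MB, Fin.val_mk]
      split_ifs <;> first | (exfalso; first | omega | assumption) | ring

end RowSums

section CountSums

lemma count_sum (n a b : ℕ) (hb : 1 ≤ b) :
    ∑ i : Fin n, (if a ≤ (i : ℕ) ∧ (i : ℕ) + b ≤ n then (1 : ℝ) else 0)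
      = ((n + 1 - b - a : ℕ) : ℝ) := by
  have h1 : ∑ i : Fin n, (if a ≤ (i : ℕ) ∧ (i : ℕ) + b ≤ n then (1 : ℝ) else 0)
      = ∑ i ∈ Finset.range n, (if a ≤ i ∧ i + b ≤ n then (1 : ℝ) else 0) :=
    Fin.sum_univ_eq_sum_range (fun i => if a ≤ i ∧ i + b ≤ n then (1 : ℝ) else 0) n
  rw [h1, Finset.sum_boole]
  congr 1
  have h2 : (Finset.range n).filter (fun i => a ≤ i ∧ i + b ≤ n)
      = Finset.Ico a (n + 1 - b) := by
    ext x
    simp only [Finset.mem_filter, Finset.mem_range, Finset.mem_Ico]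
    omega
  rw [h2, Nat.card_Ico]

lemma MA_colsum (n : ℕ) (hn : 6 ≤ n) (j : Fin (n+1)) : ∑ i, MA n i j = (n : ℝ) := by
  by_cases hj0 : (j : ℕ) = 0
  · rw [sum_eq_two_aux _ (⟨0, by omega⟩ : Fin n) ⟨2, by omega⟩
      (fin_mk_ne _ _ (by omega))
      (fun c hc1 hc2 => by
        have h1 : (c : ℕ) ≠ 0 := fun h => hc1 (Fin.val_injective h)
        have h2 : (c : ℕ) ≠ 2 := fun h => hc2 (Fin.val_injective h)
        have h3 := colA_ne0 n (c : ℕ) h2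
        simp only [MA]
        split_ifs <;> first | rfl | (exfalso; first | omega | assumption))]
    have e1 : MA n ⟨0, by omega⟩ j = (n : ℝ) - 1 := by
      norm_num [MA, hj0]
    have e2 : MA n ⟨2, by omega⟩ j = 1 := by
      norm_num [MA, hj0, colA_two]
    rw [e1, e2]; ring
  · by_cases hj1 : (j : ℕ) = 1
    · have key : ∀ i : Fin n, MA n i j =
          (if (i : ℕ) = 0 then 2 else 0) + (if (i : ℕ) = 1 then 3 else 0)
          + (if 3 ≤ (i : ℕ) ∧ (i : ℕ) + 3 ≤ n then (1 : ℝ) else 0) := by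
        intro i
        by_cases hi2 : (i : ℕ) = 2
        · have h : colA n (i : ℕ) = 0 := by rw [hi2]; exact colA_two n
          simp only [MA]
          split_ifs <;> first | (exfalso; first | omega | assumption) | norm_num
        · by_cases hile : (i : ℕ) + 3 ≤ n
          · by_cases hi0 : (i : ℕ) = 0
            · simp only [MA]
              split_ifs <;> first | (exfalso; first | omega | assumption) | norm_num
            · by_cases hi1 : (i : ℕ) = 1
              · simp only [MA]
                split_ifs <;> first | (exfalso; first | omega | assumption) | norm_num
              · have h := colA_mid n (i : ℕ) hi2 hile
                simp only [MA]
                split_ifs <;> first | (exfalso; first | omega | assumption) | norm_num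
          · have h := colA_hi n (i : ℕ) hi2 hile
            simp only [MA]
            split_ifs <;> first | (exfalso; first | omega | assumption) | norm_num
      rw [Finset.sum_congr rfl (fun i _ => key i), Finset.sum_add_distrib,
        Finset.sum_add_distrib]
      rw [sum_eq_one_aux (fun i : Fin n => if (i : ℕ) = 0 then (2:ℝ) else 0) ⟨0, by omega⟩
        (fun c hc => by
          have h1 : (c : ℕ) ≠ 0 := fun h => hc (Fin.val_injective h)
          simp [h1])]
      rw [sum_eq_one_aux (fun i : Fin n => if (i : ℕ) = 1 then (3:ℝ) else 0) ⟨1, by omega⟩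
        (fun c hc => by
          have h1 : (c : ℕ) ≠ 1 := fun h => hc (Fin.val_injective h)
          simp [h1])]
      rw [count_sum n 3 3 (by omega)]
      have hc5 : ((n + 1 - 3 - 3 : ℕ) : ℝ) = (n : ℝ) - 5 := by
        have h' : (n + 1 - 3 - 3 : ℕ) = n - 5 := by omega
        rw [h', Nat.cast_sub (by omega : 5 ≤ n)]
        norm_num
      rw [hc5]
      norm_num
    · by_cases hj2 : (j : ℕ) = 2
      · rw [sum_eq_three_aux _ (⟨1, by omega⟩ : Fin n) ⟨n - 2, by omega⟩ ⟨n - 1, by omega⟩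
          (fin_mk_ne _ _ (by omega))
          (fin_mk_ne _ _ (by omega))
          (fin_mk_ne _ _ (by omega))
          (fun c hc1 hc2 hc3 => by
            have h1 : (c : ℕ) ≠ 1 := fun h => hc1 (Fin.val_injective h)
            have h2 : (c : ℕ) ≠ n - 2 := fun h => hc2 (Fin.val_injective h)
            have h3 : (c : ℕ) ≠ n - 1 := fun h => hc3 (Fin.val_injective h)
            have h4 : (c : ℕ) < n := c.isLt
            by_cases hc2' : (c : ℕ) = 2
            · have h : colA n (c : ℕ) = 0 := by rw [hc2']; exact colA_two n
              simp only [MA]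
              split_ifs <;> first | rfl | (exfalso; first | omega | assumption)
            · by_cases hcle : (c : ℕ) + 3 ≤ n
              · by_cases hc0 : (c : ℕ) = 0
                · simp only [MA]
                  split_ifs <;> first | rfl | (exfalso; first | omega | assumption)
                · have h := colA_mid n (c : ℕ) hc2' hcle
                  simp only [MA]
                  split_ifs <;> first | rfl | (exfalso; first | omega | assumption)
              · have h := colA_hi n (c : ℕ) hc2' hcle
                simp only [MA]
                split_ifs <;> first | rfl | (exfalso; first | omega | assumption))]
        have e1 : MA n ⟨1, by omega⟩ j = (n : ℝ) - 2 := by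
          norm_num [MA, hj2]
        have e2 : MA n ⟨n - 2, by omega⟩ j = 1 := by
          have h : colA n (n - 2) = 2 := colA_hi n (n - 2) (by omega) (by omega)
          simp only [MA, Fin.val_mk, hj2, h]
          split_ifs <;> first | rfl | (exfalso; first | omega | assumption)
        have e3 : MA n ⟨n - 1, by omega⟩ j = 1 := by
          have h : colA n (n - 1) = 2 := colA_hi n (n - 1) (by omega) (by omega)
          simp only [MA, Fin.val_mk, hj2, h]
          split_ifs <;> first | rfl | (exfalso; first | omega | assumption)
        rw [e1, e2, e3]; ring
      · have hj3 : 3 ≤ (j : ℕ) := by omega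
        have hjn : (j : ℕ) ≤ n := by omega
        rw [sum_eq_one_aux _ (⟨(j : ℕ) - 1, by omega⟩ : Fin n)
          (fun c hc => by
            have h1 : (c : ℕ) ≠ (j : ℕ) - 1 := fun h => hc (Fin.val_injective h)
            have h2 := colA_le n (c : ℕ)
            simp only [MA]
            split_ifs <;> first | rfl | (exfalso; first | omega | assumption))]
        have h2 := colA_le n ((j : ℕ) - 1)
        simp only [MA, Fin.val_mk]
        split_ifs <;> first | rfl | (exfalso; first | omega | assumption)

lemma MB_colsum (n : ℕ) (hn : 6 ≤ n) (j : Fin (n+1)) : ∑ i, MB n i j = (n : ℝ) := by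
  by_cases hj0 : (j : ℕ) = 0
  · rw [sum_eq_two_aux _ (⟨0, by omega⟩ : Fin n) ⟨2, by omega⟩
      (fin_mk_ne _ _ (by omega))
      (fun c hc1 hc2 => by
        have h1 : (c : ℕ) ≠ 0 := fun h => hc1 (Fin.val_injective h)
        have h2 : (c : ℕ) ≠ 2 := fun h => hc2 (Fin.val_injective h)
        have h3 := colB_ne0 (c : ℕ) h2
        simp only [MB]
        split_ifs <;> first | rfl | (exfalso; first | omega | assumption))]
    have e1 : MB n ⟨0, by omega⟩ j = (n : ℝ) - 1 := by
      norm_num [MB, hj0]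
    have e2 : MB n ⟨2, by omega⟩ j = 1 := by
      norm_num [MB, hj0, colB_two]
    rw [e1, e2]; ring
  · by_cases hj1 : (j : ℕ) = 1
    · rw [sum_eq_two_aux _ (⟨0, by omega⟩ : Fin n) ⟨1, by omega⟩
        (fin_mk_ne _ _ (by omega))
        (fun c hc1 hc2 => by
          have h1 : (c : ℕ) ≠ 0 := fun h => hc1 (Fin.val_injective h)
          have h2 : (c : ℕ) ≠ 1 := fun h => hc2 (Fin.val_injective h)
          have h3 := colB_ne1 (c : ℕ)
          simp only [MB]
          split_ifs <;> first | rfl | (exfalso; first | omega | assumption))]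
      have e1 : MB n ⟨0, by omega⟩ j = 2 := by
        norm_num [MB, hj1]
      have e2 : MB n ⟨1, by omega⟩ j = (n : ℝ) - 2 := by
        norm_num [MB, hj1]
      rw [e1, e2]; ring
    · by_cases hj2 : (j : ℕ) = 2
      · have key : ∀ i : Fin n, MB n i j =
            (if (i : ℕ) = 1 then (3 : ℝ) else 0)
            + (if 3 ≤ (i : ℕ) ∧ (i : ℕ) + 1 ≤ n then (1 : ℝ) else 0) := by
          intro i
          by_cases hi2 : (i : ℕ) = 2
          · have h : colB (i : ℕ) = 0 := by rw [hi2]; exact colB_two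
            simp only [MB]
            split_ifs <;> first | (exfalso; first | omega | assumption) | norm_num
          · by_cases hi0 : (i : ℕ) = 0
            · simp only [MB]
              split_ifs <;> first | (exfalso; first | omega | assumption) | norm_num
            · by_cases hi1 : (i : ℕ) = 1
              · simp only [MB]
                split_ifs <;> first | (exfalso; first | omega | assumption) | norm_num
              · have h : colB (i : ℕ) = 2 := colB_hi (i : ℕ) hi2
                have h4 : (i : ℕ) < n := i.isLt
                simp only [MB]
                split_ifs <;> first | (exfalso; first | omega | assumption) | norm_num
        rw [Finset.sum_congr rfl (fun i _ => key i), Finset.sum_add_distrib]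
        rw [sum_eq_one_aux (fun i : Fin n => if (i : ℕ) = 1 then (3:ℝ) else 0) ⟨1, by omega⟩
          (fun c hc => by
            have h1 : (c : ℕ) ≠ 1 := fun h => hc (Fin.val_injective h)
            simp [h1])]
        rw [count_sum n 3 1 (by omega)]
        have hc3 : ((n + 1 - 1 - 3 : ℕ) : ℝ) = (n : ℝ) - 3 := by
          have h' : (n + 1 - 1 - 3 : ℕ) = n - 3 := by omega
          rw [h', Nat.cast_sub (by omega : 3 ≤ n)]
          norm_num
        rw [hc3]
        norm_num
      · have hj3 : 3 ≤ (j : ℕ) := by omega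
        have hjn : (j : ℕ) ≤ n := by omega
        rw [sum_eq_one_aux _ (⟨(j : ℕ) - 1, by omega⟩ : Fin n)
          (fun c hc => by
            have h1 : (c : ℕ) ≠ (j : ℕ) - 1 := fun h => hc (Fin.val_injective h)
            have h2 := colB_le (c : ℕ)
            simp only [MB]
            split_ifs <;> first | rfl | (exfalso; first | omega | assumption))]
        have h2 := colB_le ((j : ℕ) - 1)
        simp only [MB, Fin.val_mk]
        split_ifs <;> first | rfl | (exfalso; first | omega | assumption)

end CountSums

section Rigid

lemma MA_rigid (n : ℕ) (hn : 6 ≤ n) (D : Matrix (Fin n) (Fin (n+1)) ℝ)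
    (h0 : ∀ i j, MA n i j = 0 → D i j = 0)
    (hc : ∀ j, ∑ i, D i j = 0) (hr : ∀ i, ∑ j, D i j = 0) : D = 0 := by
  -- Step 1: leaf entries vanish
  have step1 : ∀ (i : Fin n) (j : Fin (n+1)), 2 ≤ (i : ℕ) → (j : ℕ) = (i : ℕ) + 1 →
      D i j = 0 := by
    intro i j hi hj
    have hone := sum_eq_one_aux (fun c => D c j) i (fun c hcne => by
      apply h0
      have hcv : (c : ℕ) ≠ (i : ℕ) := fun h => hcne (Fin.val_injective h)
      have h2 := colA_le n (c : ℕ)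
      simp only [MA]
      split_ifs <;> first | rfl | (exfalso; first | omega | assumption))
    exact hone.symm.trans (hc j)
  -- Step 2: the other entry in each row i ≥ 2 vanishes
  have step2 : ∀ (i : Fin n) (j : Fin (n+1)), 2 ≤ (i : ℕ) → (j : ℕ) = colA n (i : ℕ) →
      D i j = 0 := by
    intro i j hi hj
    have hcle := colA_le n (i : ℕ)
    have hlt : (i : ℕ) + 1 < n + 1 := by omega
    have hb := step1 i ⟨(i : ℕ) + 1, hlt⟩ hi rfl
    have htwo := sum_eq_two_aux (fun j' => D i j') j ⟨(i : ℕ) + 1, hlt⟩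
      (by apply Fin.ne_of_val_ne; simp only [Fin.val_mk]; omega)
      (fun c hc1 hc2 => by
        apply h0
        have h1 : (c : ℕ) ≠ (j : ℕ) := fun h => hc1 (Fin.val_injective h)
        have h2 : (c : ℕ) ≠ (i : ℕ) + 1 := fun h => hc2 (Fin.val_injective h)
        simp only [MA]
        split_ifs <;> first | rfl | (exfalso; first | omega | assumption))
    have hsum := hr i
    rw [htwo] at hsum
    simp only [hb, add_zero] at hsum
    exact hsum
  -- Step 3: D (0,0) = 0 using column 0
  have hD20 : D ⟨2, by omega⟩ ⟨0, by omega⟩ = 0 :=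
    step2 _ _ (by simp) (by simp [colA_two])
  have hD00 : D ⟨0, by omega⟩ ⟨0, by omega⟩ = 0 := by
    have htwo := sum_eq_two_aux (fun c => D c ⟨0, by omega⟩) ⟨0, by omega⟩ ⟨2, by omega⟩
      (fin_mk_ne _ _ (by omega))
      (fun c hc1 hc2 => by
        apply h0
        have h1 : (c : ℕ) ≠ 0 := fun h => hc1 (Fin.val_injective h)
        have h2 : (c : ℕ) ≠ 2 := fun h => hc2 (Fin.val_injective h)
        have h3 := colA_ne0 n (c : ℕ) h2
        simp only [MA]
        split_ifs <;> first | rfl | (exfalso; first | omega | assumption))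
    have hsum := hc ⟨0, by omega⟩
    rw [htwo] at hsum
    simp only [hD20, add_zero] at hsum
    exact hsum
  -- Step 4: D (0,1) = 0 using row 0
  have hD01 : D ⟨0, by omega⟩ ⟨1, by omega⟩ = 0 := by
    have htwo := sum_eq_two_aux (fun j' => D ⟨0, by omega⟩ j') ⟨0, by omega⟩ ⟨1, by omega⟩
      (fin_mk_ne _ _ (by omega))
      (fun c hc1 hc2 => by
        apply h0
        have h1 : (c : ℕ) ≠ 0 := fun h => hc1 (Fin.val_injective h)
        have h2 : (c : ℕ) ≠ 1 := fun h => hc2 (Fin.val_injective h)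
        simp only [MA]
        split_ifs <;> first | rfl | (exfalso; first | omega | assumption))
    have hsum := hr ⟨0, by omega⟩
    rw [htwo] at hsum
    simp only [hD00, zero_add] at hsum
    exact hsum
  -- Step 5: D (1,1) = 0 using column 1
  have hD11 : D ⟨1, by omega⟩ ⟨1, by omega⟩ = 0 := by
    have hone := sum_eq_one_aux (fun c => D c ⟨1, by omega⟩) ⟨1, by omega⟩
      (fun c hcne => by
        have h1 : (c : ℕ) ≠ 1 := fun h => hcne (Fin.val_injective h)
        by_cases hc0 : (c : ℕ) = 0
        · have : c = ⟨0, by omega⟩ := Fin.val_injective (by simpa using hc0)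
          rw [this]
          exact hD01
        · by_cases hcm : 3 ≤ (c : ℕ) ∧ (c : ℕ) + 3 ≤ n
          · exact step2 c _ (by omega)
              (by simp only [Fin.val_mk]; exact (colA_mid n (c : ℕ) (by omega) hcm.2).symm)
          · apply h0
            have h3 : colA n (c : ℕ) ≠ 1 := colA_ne1 n (c : ℕ) (by omega)
            simp only [MA]
            split_ifs <;> first | rfl | (exfalso; first | omega | assumption))
    exact hone.symm.trans (hc ⟨1, by omega⟩)
  -- Step 6: D (1,2) = 0 using row 1
  have hD12 : D ⟨1, by omega⟩ ⟨2, by omega⟩ = 0 := by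
    have htwo := sum_eq_two_aux (fun j' => D ⟨1, by omega⟩ j') ⟨1, by omega⟩ ⟨2, by omega⟩
      (fin_mk_ne _ _ (by omega))
      (fun c hc1 hc2 => by
        apply h0
        have h1 : (c : ℕ) ≠ 1 := fun h => hc1 (Fin.val_injective h)
        have h2 : (c : ℕ) ≠ 2 := fun h => hc2 (Fin.val_injective h)
        simp only [MA]
        split_ifs <;> first | rfl | (exfalso; first | omega | assumption))
    have hsum := hr ⟨1, by omega⟩
    rw [htwo] at hsum
    simp only [hD11, zero_add] at hsum
    exact hsum
  -- assemble
  funext i j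
  show D i j = 0
  by_cases hi0 : (i : ℕ) = 0
  · have hie : i = ⟨0, by omega⟩ := Fin.val_injective (by simpa using hi0)
    by_cases hj0 : (j : ℕ) = 0
    · have hje : j = ⟨0, by omega⟩ := Fin.val_injective (by simpa using hj0)
      rw [hie, hje]; exact hD00
    · by_cases hj1 : (j : ℕ) = 1
      · have hje : j = ⟨1, by omega⟩ := Fin.val_injective (by simpa using hj1)
        rw [hie, hje]; exact hD01
      · apply h0
        simp only [MA]
        split_ifs <;> first | rfl | (exfalso; first | omega | assumption)
  · by_cases hi1 : (i : ℕ) = 1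
    · have hie : i = ⟨1, by omega⟩ := Fin.val_injective (by simpa using hi1)
      by_cases hj1 : (j : ℕ) = 1
      · have hje : j = ⟨1, by omega⟩ := Fin.val_injective (by simpa using hj1)
        rw [hie, hje]; exact hD11
      · by_cases hj2 : (j : ℕ) = 2
        · have hje : j = ⟨2, by omega⟩ := Fin.val_injective (by simpa using hj2)
          rw [hie, hje]; exact hD12
        · apply h0
          simp only [MA]
          split_ifs <;> first | rfl | (exfalso; first | omega | assumption)
    · have hi2 : 2 ≤ (i : ℕ) := by omega
      by_cases hjc : (j : ℕ) = colA n (i : ℕ)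
      · exact step2 i j hi2 hjc
      · by_cases hji : (j : ℕ) = (i : ℕ) + 1
        · exact step1 i j hi2 hji
        · apply h0
          simp only [MA]
          split_ifs <;> first | rfl | (exfalso; first | omega | assumption)

lemma MB_rigid (n : ℕ) (hn : 6 ≤ n) (D : Matrix (Fin n) (Fin (n+1)) ℝ)
    (h0 : ∀ i j, MB n i j = 0 → D i j = 0)
    (hc : ∀ j, ∑ i, D i j = 0) (hr : ∀ i, ∑ j, D i j = 0) : D = 0 := by
  have step1 : ∀ (i : Fin n) (j : Fin (n+1)), 2 ≤ (i : ℕ) → (j : ℕ) = (i : ℕ) + 1 →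
      D i j = 0 := by
    intro i j hi hj
    have hone := sum_eq_one_aux (fun c => D c j) i (fun c hcne => by
      apply h0
      have hcv : (c : ℕ) ≠ (i : ℕ) := fun h => hcne (Fin.val_injective h)
      have h2 := colB_le (c : ℕ)
      simp only [MB]
      split_ifs <;> first | rfl | (exfalso; first | omega | assumption))
    exact hone.symm.trans (hc j)
  have step2 : ∀ (i : Fin n) (j : Fin (n+1)), 2 ≤ (i : ℕ) → (j : ℕ) = colB (i : ℕ) →
      D i j = 0 := by
    intro i j hi hj
    have hcle := colB_le (i : ℕ)
    have hlt : (i : ℕ) + 1 < n + 1 := by omega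
    have hb := step1 i ⟨(i : ℕ) + 1, hlt⟩ hi rfl
    have htwo := sum_eq_two_aux (fun j' => D i j') j ⟨(i : ℕ) + 1, hlt⟩
      (by apply Fin.ne_of_val_ne; simp only [Fin.val_mk]; omega)
      (fun c hc1 hc2 => by
        apply h0
        have h1 : (c : ℕ) ≠ (j : ℕ) := fun h => hc1 (Fin.val_injective h)
        have h2 : (c : ℕ) ≠ (i : ℕ) + 1 := fun h => hc2 (Fin.val_injective h)
        simp only [MB]
        split_ifs <;> first | rfl | (exfalso; first | omega | assumption))
    have hsum := hr i
    rw [htwo] at hsum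
    simp only [hb, add_zero] at hsum
    exact hsum
  have hD20 : D ⟨2, by omega⟩ ⟨0, by omega⟩ = 0 :=
    step2 _ _ (by simp) (by simp [colB_two])
  have hD00 : D ⟨0, by omega⟩ ⟨0, by omega⟩ = 0 := by
    have htwo := sum_eq_two_aux (fun c => D c ⟨0, by omega⟩) ⟨0, by omega⟩ ⟨2, by omega⟩
      (fin_mk_ne _ _ (by omega))
      (fun c hc1 hc2 => by
        apply h0
        have h1 : (c : ℕ) ≠ 0 := fun h => hc1 (Fin.val_injective h)
        have h2 : (c : ℕ) ≠ 2 := fun h => hc2 (Fin.val_injective h)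
        have h3 := colB_ne0 (c : ℕ) h2
        simp only [MB]
        split_ifs <;> first | rfl | (exfalso; first | omega | assumption))
    have hsum := hc ⟨0, by omega⟩
    rw [htwo] at hsum
    simp only [hD20, add_zero] at hsum
    exact hsum
  have hD01 : D ⟨0, by omega⟩ ⟨1, by omega⟩ = 0 := by
    have htwo := sum_eq_two_aux (fun j' => D ⟨0, by omega⟩ j') ⟨0, by omega⟩ ⟨1, by omega⟩
      (fin_mk_ne _ _ (by omega))
      (fun c hc1 hc2 => by
        apply h0
        have h1 : (c : ℕ) ≠ 0 := fun h => hc1 (Fin.val_injective h)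
        have h2 : (c : ℕ) ≠ 1 := fun h => hc2 (Fin.val_injective h)
        simp only [MB]
        split_ifs <;> first | rfl | (exfalso; first | omega | assumption))
    have hsum := hr ⟨0, by omega⟩
    rw [htwo] at hsum
    simp only [hD00, zero_add] at hsum
    exact hsum
  have hD11 : D ⟨1, by omega⟩ ⟨1, by omega⟩ = 0 := by
    have htwo := sum_eq_two_aux (fun c => D c ⟨1, by omega⟩) ⟨0, by omega⟩ ⟨1, by omega⟩
      (fin_mk_ne _ _ (by omega))
      (fun c hc1 hc2 => by
        apply h0
        have h1 : (c : ℕ) ≠ 0 := fun h => hc1 (Fin.val_injective h)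
        have h2 : (c : ℕ) ≠ 1 := fun h => hc2 (Fin.val_injective h)
        have h3 := colB_ne1 (c : ℕ)
        simp only [MB]
        split_ifs <;> first | rfl | (exfalso; first | omega | assumption))
    have hsum := hc ⟨1, by omega⟩
    rw [htwo] at hsum
    simp only [hD01, zero_add] at hsum
    exact hsum
  have hD12 : D ⟨1, by omega⟩ ⟨2, by omega⟩ = 0 := by
    have htwo := sum_eq_two_aux (fun j' => D ⟨1, by omega⟩ j') ⟨1, by omega⟩ ⟨2, by omega⟩
      (fin_mk_ne _ _ (by omega))
      (fun c hc1 hc2 => by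
        apply h0
        have h1 : (c : ℕ) ≠ 1 := fun h => hc1 (Fin.val_injective h)
        have h2 : (c : ℕ) ≠ 2 := fun h => hc2 (Fin.val_injective h)
        simp only [MB]
        split_ifs <;> first | rfl | (exfalso; first | omega | assumption))
    have hsum := hr ⟨1, by omega⟩
    rw [htwo] at hsum
    simp only [hD11, zero_add] at hsum
    exact hsum
  funext i j
  show D i j = 0
  by_cases hi0 : (i : ℕ) = 0
  · have hie : i = ⟨0, by omega⟩ := Fin.val_injective (by simpa using hi0)
    by_cases hj0 : (j : ℕ) = 0
    · have hje : j = ⟨0, by omega⟩ := Fin.val_injective (by simpa using hj0)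
      rw [hie, hje]; exact hD00
    · by_cases hj1 : (j : ℕ) = 1
      · have hje : j = ⟨1, by omega⟩ := Fin.val_injective (by simpa using hj1)
        rw [hie, hje]; exact hD01
      · apply h0
        simp only [MB]
        split_ifs <;> first | rfl | (exfalso; first | omega | assumption)
  · by_cases hi1 : (i : ℕ) = 1
    · have hie : i = ⟨1, by omega⟩ := Fin.val_injective (by simpa using hi1)
      by_cases hj1 : (j : ℕ) = 1
      · have hje : j = ⟨1, by omega⟩ := Fin.val_injective (by simpa using hj1)
        rw [hie, hje]; exact hD11
      · by_cases hj2 : (j : ℕ) = 2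
        · have hje : j = ⟨2, by omega⟩ := Fin.val_injective (by simpa using hj2)
          rw [hie, hje]; exact hD12
        · apply h0
          simp only [MB]
          split_ifs <;> first | rfl | (exfalso; first | omega | assumption)
    · have hi2 : 2 ≤ (i : ℕ) := by omega
      by_cases hjc : (j : ℕ) = colB (i : ℕ)
      · exact step2 i j hi2 hjc
      · by_cases hji : (j : ℕ) = (i : ℕ) + 1
        · exact step1 i j hi2 hji
        · apply h0
          simp only [MB]
          split_ifs <;> first | rfl | (exfalso; first | omega | assumption)

end Rigid

section Final

lemma MA_isDSA (n : ℕ) (hn : 6 ≤ n) : IsDSA n (n+1) (MA n) :=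
  ⟨MA_nonneg n hn, fun j => MA_colsum n hn j,
    fun i => by rw [MA_rowsum n hn i]; push_cast; ring⟩

lemma MB_isDSA (n : ℕ) (hn : 6 ≤ n) : IsDSA n (n+1) (MB n) :=
  ⟨MB_nonneg n hn, fun j => MB_colsum n hn j,
    fun i => by rw [MB_rowsum n hn i]; push_cast; ring⟩

lemma rigid_extremal_aux {n : ℕ} (M : Matrix (Fin n) (Fin (n+1)) ℝ)
    (hd : IsDSA n (n+1) M)
    (hrig : ∀ D : Matrix (Fin n) (Fin (n+1)) ℝ,
      (∀ i j, M i j = 0 → D i j = 0) → (∀ j, ∑ i, D i j = 0) →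
      (∀ i, ∑ j, D i j = 0) → D = 0)
    (B C : Matrix (Fin n) (Fin (n+1)) ℝ) (t : ℝ)
    (hB : IsDSA n (n+1) B) (hC : IsDSA n (n+1) C) (ht : 0 < t) (ht1 : t < 1)
    (hM : M = t • B + (1 - t) • C) : B = M := by
  have hB0 : ∀ i j, M i j = 0 → B i j = 0 := by
    intro i j h
    have h1 : M i j = t * B i j + (1 - t) * C i j := by
      rw [hM]; simp [Matrix.add_apply, Matrix.smul_apply, smul_eq_mul]
    have h2 : 0 ≤ t * B i j := mul_nonneg ht.le (hB.1 i j)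
    have h3 : 0 ≤ (1 - t) * C i j := mul_nonneg (by linarith) (hC.1 i j)
    have h4 : t * B i j = 0 := by linarith
    rcases mul_eq_zero.mp h4 with h5 | h5
    · exact absurd h5 (ne_of_gt ht)
    · exact h5
  have hD := hrig (B - M)
    (fun i j h => by simp [Matrix.sub_apply, hB0 i j h, h])
    (fun j => by
      simp only [Matrix.sub_apply, Finset.sum_sub_distrib, hB.2.1 j, hd.2.1 j, sub_self])
    (fun i => by
      simp only [Matrix.sub_apply, Finset.sum_sub_distrib, hB.2.2 i, hd.2.2 i, sub_self])
  exact sub_eq_zero.mp hD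

lemma bridgeAB (n : ℕ) (hn : 6 ≤ n) (i : Fin n) (j : Fin (n+1)) :
    MB n i j = MA n i (if (i : ℕ) = 1 ∨ (3 ≤ (i : ℕ) ∧ (i : ℕ) + 3 ≤ n)
      then Equiv.swap (⟨1, by omega⟩ : Fin (n+1)) ⟨2, by omega⟩ j else j) := by
  by_cases hcnd : (i : ℕ) = 1 ∨ (3 ≤ (i : ℕ) ∧ (i : ℕ) + 3 ≤ n)
  · rw [if_pos hcnd]
    by_cases hj1 : j = ⟨1, by omega⟩
    · subst hj1
      rw [Equiv.swap_apply_left]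
      rcases hcnd with hi1 | ⟨h3, hle⟩
      · norm_num [MB, MA, hi1]
      · have h := colA_mid n (i : ℕ) (by omega) hle
        have h' := colB_hi (i : ℕ) (by omega)
        simp only [MB, MA, Fin.val_mk]
        split_ifs <;> first | rfl | (exfalso; first | omega | assumption)
    · by_cases hj2 : j = ⟨2, by omega⟩
      · subst hj2
        rw [Equiv.swap_apply_right]
        rcases hcnd with hi1 | ⟨h3, hle⟩
        · norm_num [MB, MA, hi1]
        · have h := colA_mid n (i : ℕ) (by omega) hle
          have h' := colB_hi (i : ℕ) (by omega)
          simp only [MB, MA, Fin.val_mk]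
          split_ifs <;> first | rfl | (exfalso; first | omega | assumption)
      · rw [Equiv.swap_apply_of_ne_of_ne hj1 hj2]
        have hv1 : (j : ℕ) ≠ 1 := fun h => hj1 (Fin.val_injective h)
        have hv2 : (j : ℕ) ≠ 2 := fun h => hj2 (Fin.val_injective h)
        rcases hcnd with hi1 | ⟨h3, hle⟩
        · simp only [MB, MA]
          split_ifs <;> first | rfl | (exfalso; first | omega | assumption)
        · have h := colA_mid n (i : ℕ) (by omega) hle
          have h' := colB_hi (i : ℕ) (by omega)
          simp only [MB, MA]
          split_ifs <;> first | rfl | (exfalso; first | omega | assumption)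
  · rw [if_neg hcnd]
    push_neg at hcnd
    obtain ⟨hi1, hrest⟩ := hcnd
    by_cases hi0 : (i : ℕ) = 0
    · simp [MB, MA, hi0]
    · have hi2' : 2 ≤ (i : ℕ) := by omega
      have hAB : colA n (i : ℕ) = colB (i : ℕ) := by
        by_cases h2 : (i : ℕ) = 2
        · rw [h2, colA_two, colB_two]
        · rw [colA_hi n _ h2 (by have := hrest (by omega); omega), colB_hi _ h2]
      simp [MB, MA, hAB, hi0, hi1]

end Final

section Final2

lemma multiset_eq (n : ℕ) (hn : 6 ≤ n) :
    (Finset.univ.val.map fun p : Fin n × Fin (n + 1) => MA n p.1 p.2) =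
      (Finset.univ.val.map fun p : Fin n × Fin (n + 1) => MB n p.1 p.2) := by
  have hlt1 : 1 < n + 1 := by omega
  have hlt2 : 2 < n + 1 := by omega
  set s : Equiv.Perm (Fin (n+1)) := Equiv.swap ⟨1, hlt1⟩ ⟨2, hlt2⟩ with hs
  let e : (Fin n × Fin (n+1)) ≃ (Fin n × Fin (n+1)) :=
    { toFun := fun p => (p.1, if (p.1 : ℕ) = 1 ∨ (3 ≤ (p.1 : ℕ) ∧ (p.1 : ℕ) + 3 ≤ n)
        then s p.2 else p.2)
      invFun := fun p => (p.1, if (p.1 : ℕ) = 1 ∨ (3 ≤ (p.1 : ℕ) ∧ (p.1 : ℕ) + 3 ≤ n)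
        then s p.2 else p.2)
      left_inv := fun p => by
        by_cases h : (p.1 : ℕ) = 1 ∨ (3 ≤ (p.1 : ℕ) ∧ (p.1 : ℕ) + 3 ≤ n) <;>
          simp [h, hs, Equiv.swap_apply_self]
      right_inv := fun p => by
        by_cases h : (p.1 : ℕ) = 1 ∨ (3 ≤ (p.1 : ℕ) ∧ (p.1 : ℕ) + 3 ≤ n) <;>
          simp [h, hs, Equiv.swap_apply_self] }
  have hfun : (fun p : Fin n × Fin (n+1) => MB n p.1 p.2)
      = (fun p : Fin n × Fin (n+1) => MA n p.1 p.2) ∘ ⇑e := by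
    funext p
    exact bridgeAB n hn p.1 p.2
  have hval : Multiset.map (⇑e) Finset.univ.val = Finset.univ.val := by
    conv_lhs => rw [← Equiv.coe_toEmbedding]
    rw [← Finset.map_val, Finset.map_univ_equiv]
  rw [hfun, ← Multiset.map_map, hval]

lemma A_spec1 (n : ℕ) (hn : 6 ≤ n) :
    MA n ⟨1, by omega⟩ ⟨2, by omega⟩ = (n : ℝ) - 2 := by
  norm_num [MA]

lemma A_spec2 (n : ℕ) (hn : 6 ≤ n) :
    MA n ⟨n - 2, by omega⟩ ⟨2, by omega⟩ = 1 := by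
  have h := colA_hi n (n - 2) (by omega) (by omega)
  simp only [MA, Fin.val_mk]
  split_ifs <;> first | rfl | (exfalso; first | omega | assumption)

lemma B_nospec (n : ℕ) (hn : 6 ≤ n) (j : Fin (n+1)) (i1 i2 : Fin n)
    (h1 : MB n i1 j = (n : ℝ) - 2) (h2 : MB n i2 j = 1) : False := by
  have h6 : (6 : ℝ) ≤ (n : ℝ) := by exact_mod_cast hn
  have hb1 := colB_le (i1 : ℕ)
  have hb1' := colB_ne1 (i1 : ℕ)
  have hj1 : (j : ℕ) = 1 := by
    by_contra hne
    simp only [MB] at h1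
    split_ifs at h1 <;> first | omega | linarith
  have hb2 := colB_ne1 (i2 : ℕ)
  simp only [MB] at h2
  split_ifs at h2 <;> first | omega | linarith

lemma not_matequiv (n : ℕ) (hn : 6 ≤ n)
    (h : ∃ (σ : Equiv.Perm (Fin n)) (τ : Equiv.Perm (Fin (n+1))),
      ∀ i j, MB n i j = MA n (σ i) (τ j)) : False := by
  obtain ⟨σ, τ, hstv⟩ := h
  have e1 : MB n (σ.symm ⟨1, by omega⟩) (τ.symm ⟨2, by omega⟩) = (n : ℝ) - 2 := by
    rw [hstv, Equiv.apply_symm_apply, Equiv.apply_symm_apply]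
    exact A_spec1 n hn
  have e2 : MB n (σ.symm ⟨n - 2, by omega⟩) (τ.symm ⟨2, by omega⟩) = 1 := by
    rw [hstv, Equiv.apply_symm_apply, Equiv.apply_symm_apply]
    exact A_spec2 n hn
  exact B_nospec n hn _ _ _ e1 e2

end Final2

/-- For every `n ≥ 6` there exist two extremal arrays in
`S(n, n+1)` with the same multiset of entries that are not equivalent. -/
theorem exists_nonequivalent_extremal_same_entries (n : ℕ) (hn : 6 ≤ n) :
    ∃ A B : Matrix (Fin n) (Fin (n + 1)) ℝ,
      IsExtremal n (n + 1) A ∧ IsExtremal n (n + 1) B ∧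
      (Finset.univ.val.map fun p : Fin n × Fin (n + 1) => A p.1 p.2) =
        (Finset.univ.val.map fun p : Fin n × Fin (n + 1) => B p.1 p.2) ∧
      ¬ MatEquiv n (n + 1) A B := by
  refine ⟨MA n, MB n, ?_, ?_, multiset_eq n hn, ?_⟩
  · exact ⟨MA_isDSA n hn, fun B C t hB hC ht ht1 hM =>
      Or.inl (rigid_extremal_aux (MA n) (MA_isDSA n hn) (MA_rigid n hn) B C t hB hC ht ht1 hM)⟩
  · exact ⟨MB_isDSA n hn, fun B C t hB hC ht ht1 hM =>
      Or.inl (rigid_extremal_aux (MB n) (MB_isDSA n hn) (MB_rigid n hn) B C t hB hC ht ht1 hM)⟩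
  · intro h
    exact not_matequiv n hn h
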